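/- Let S be a full-rank quantum model. If there exists a projective quantum model S' with f_S = f_{S'} (i.e., the abstract state defined by S is projective), then S itself is projective. -/

import Mathlib

open scoped Matrix Kronecker ComplexOrder

noncomputable section

namespace SelfTestPaper

/-- A finite-dimensional (POVM) quantum model for a bipartite Bell scenario:
Hilbert spaces `ℂ^dA`, `ℂ^dB`, POVMs `{M x a}` and `{N y b}`, and a unit vector `ψ`. -/
structure QModel (X Y A B : Type) [Fintype A] [Fintype B] where
  dA : ℕ
  dB : ℕ
  M : X → A → Matrix (Fin dA) (Fin dA) ℂ
  N : Y → B → Matrix (Fin dB) (Fin dB) ℂ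
  ψ : Fin dA × Fin dB → ℂ
  M_pos : ∀ x a, (M x a).PosSemidef
  M_sum : ∀ x, ∑ a, M x a = 1
  N_pos : ∀ y b, (N y b).PosSemidef
  N_sum : ∀ y, ∑ b, N y b = 1
  ψ_unit : ∑ i, star (ψ i) * ψ i = 1

variable {X Y A B : Type} [Fintype A] [Fintype B]

/-- Inner product `⟨v, w⟩` (antilinear in the first argument). -/
def qInner {n : Type} [Fintype n] (v w : n → ℂ) : ℂ := ∑ i, star (v i) * w i

/-- The model `S` realizes the correlation `p`:
`p(a,b|x,y) = ⟨ψ|(M^x_a ⊗ N^y_b)|ψ⟩`. -/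
def Realizes (S : QModel X Y A B) (p : A → B → X → Y → ℝ) : Prop :=
  ∀ a b x y, qInner S.ψ ((S.M x a ⊗ₖ S.N y b).mulVec S.ψ) = (p a b x y : ℂ)

/-- The set `C_q(X,Y,A,B)` of quantum correlations. -/
def CqSet (X Y A B : Type) [Fintype A] [Fintype B] : Set (A → B → X → Y → ℝ) :=
  {p | ∃ S : QModel X Y A B, Realizes S p}

/-- `Dilates S St` means `S ⪰ St`, i.e. `St` is a local dilation of `S`:
there are auxiliary spaces, a unit auxiliary state and local isometries `IA`, `IB` with
`(IA ⊗ IB)(M^x_a ⊗ N^y_b)|ψ⟩ = (M̃^x_a ⊗ Ñ^y_b |ψ̃⟩) ⊗ |aux⟩` (written pointwise, under the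
identification `(H̃_A ⊗ H_A^aux) ⊗ (H̃_B ⊗ H_B^aux) ≅ (H̃_A ⊗ H̃_B) ⊗ (H_A^aux ⊗ H_B^aux)`). -/
def Dilates (S St : QModel X Y A B) : Prop :=
  ∃ (eA eB : ℕ) (aux : Fin eA × Fin eB → ℂ)
    (IA : Matrix (Fin St.dA × Fin eA) (Fin S.dA) ℂ)
    (IB : Matrix (Fin St.dB × Fin eB) (Fin S.dB) ℂ),
    IAᴴ * IA = 1 ∧ IBᴴ * IB = 1 ∧ (∑ i, star (aux i) * aux i) = 1 ∧
    ∀ (x : X) (a : A) (y : Y) (b : B) (i : Fin St.dA) (k : Fin eA) (j : Fin St.dB) (l : Fin eB),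
      ((IA ⊗ₖ IB).mulVec ((S.M x a ⊗ₖ S.N y b).mulVec S.ψ)) ((i, k), (j, l))
        = ((St.M x a ⊗ₖ St.N y b).mulVec St.ψ) (i, j) * aux (k, l)

/-- `p` is a self-test for the class `C`: some ideal model in `C` realizes `p` and is a
local dilation of every model for `p` in `C`. -/
def SelfTestFor (C : Set (QModel X Y A B)) (p : A → B → X → Y → ℝ) : Prop :=
  ∃ St ∈ C, Realizes St p ∧ ∀ S ∈ C, Realizes S p → Dilates S St

/-- Word value `⟨ψ| M^{x₁}_{a₁} ⋯ M^{x_k}_{a_k} ⊗ N^{y₁}_{b₁} ⋯ N^{y_ℓ}_{b_ℓ} |ψ⟩`. -/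
def wordValue (S : QModel X Y A B) (wA : List (X × A)) (wB : List (Y × B)) : ℂ :=
  qInner S.ψ ((((wA.map fun q => S.M q.1 q.2).prod) ⊗ₖ
    ((wB.map fun q => S.N q.1 q.2).prod)).mulVec S.ψ)

/-- `S` and `S'` define the same abstract state: all their word values coincide. -/
def SameState (S S' : QModel X Y A B) : Prop :=
  ∀ wA wB, wordValue S wA wB = wordValue S' wA wB

/-- Reduced density matrix of `ψ` on the first tensor factor. -/
def redA {m n : ℕ} (ψ : Fin m × Fin n → ℂ) : Matrix (Fin m) (Fin m) ℂ :=
  Matrix.of fun i i' => ∑ j, ψ (i, j) * star (ψ (i', j))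

/-- Reduced density matrix of `ψ` on the second tensor factor. -/
def redB {m n : ℕ} (ψ : Fin m × Fin n → ℂ) : Matrix (Fin n) (Fin n) ℂ :=
  Matrix.of fun j j' => ∑ i, ψ (i, j) * star (ψ (i, j'))

/-- `P` is the orthogonal projection onto the range (support) of the positive
semidefinite matrix `ρ`. -/
def IsSupportProjection {n : Type} [Fintype n] [DecidableEq n] (ρ P : Matrix n n ℂ) : Prop :=
  P.IsHermitian ∧ P * P = P ∧ P * ρ = ρ ∧ ∀ v, ρ.mulVec v = 0 → P.mulVec v = 0

/-- `S` is centrally supported: the support projections of `ψ` commute with all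
measurement operators. -/
def CentrallySupported (S : QModel X Y A B) : Prop :=
  ∃ PA PB, IsSupportProjection (redA S.ψ) PA ∧ IsSupportProjection (redB S.ψ) PB ∧
    (∀ x a, PA * S.M x a = S.M x a * PA) ∧ (∀ y b, PB * S.N y b = S.N y b * PB)

/-- `S` is full-rank: both support projections of `ψ` are the identity, i.e. the reduced
density matrices have trivial kernel. -/
def FullRank (S : QModel X Y A B) : Prop :=
  (∀ v, (redA S.ψ).mulVec v = 0 → v = 0) ∧ (∀ v, (redB S.ψ).mulVec v = 0 → v = 0)

/-- `S` is projective: all measurement operators are self-adjoint projections. -/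
def Projective (S : QModel X Y A B) : Prop :=
  (∀ x a, (S.M x a).IsHermitian ∧ S.M x a * S.M x a = S.M x a) ∧
  (∀ y b, (S.N y b).IsHermitian ∧ S.N y b * S.N y b = S.N y b)

/-- `St` is locally equivalent to a submodel of `S`, expressed via local isometries
`VA`, `VB` whose range projections `VA * VAᴴ`, `VB * VBᴴ` commute with the measurements. -/
def EquivToSubmodel (S St : QModel X Y A B) : Prop :=
  ∃ (VA : Matrix (Fin S.dA) (Fin St.dA) ℂ) (VB : Matrix (Fin S.dB) (Fin St.dB) ℂ) (lam : ℂ),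
    lam ≠ 0 ∧ VAᴴ * VA = 1 ∧ VBᴴ * VB = 1 ∧
    (∀ x a, (VA * VAᴴ) * S.M x a = S.M x a * (VA * VAᴴ)) ∧
    (∀ y b, (VB * VBᴴ) * S.N y b = S.N y b * (VB * VBᴴ)) ∧
    (∀ x a, St.M x a = VAᴴ * S.M x a * VA) ∧
    (∀ y b, St.N y b = VBᴴ * S.N y b * VB) ∧
    (VAᴴ ⊗ₖ VBᴴ).mulVec S.ψ = lam • St.ψ

/-- A class of models is closed if it is closed under passing to models locally
equivalent to submodels. -/
def ClosedClass (C : Set (QModel X Y A B)) : Prop :=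
  ∀ S ∈ C, ∀ St, EquivToSubmodel S St → St ∈ C

/-- `p` is an abstract state self-test for `C`: `C` contains a model for `p`, and any two
models for `p` in `C` define the same abstract state. -/
def AbstractSelfTestFor (C : Set (QModel X Y A B)) (p : A → B → X → Y → ℝ) : Prop :=
  (∃ S ∈ C, Realizes S p) ∧
  ∀ S ∈ C, ∀ S' ∈ C, Realizes S p → Realizes S' p → SameState S S'

/-- `Sp` is the support model of `S`, presented via isometries `VA`, `VB` onto the
supports of `ψ` (so `VA * VAᴴ`, `VB * VBᴴ` are the support projections). -/
def IsSupportModel (S Sp : QModel X Y A B) : Prop :=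
  ∃ (VA : Matrix (Fin S.dA) (Fin Sp.dA) ℂ) (VB : Matrix (Fin S.dB) (Fin Sp.dB) ℂ),
    VAᴴ * VA = 1 ∧ VBᴴ * VB = 1 ∧
    IsSupportProjection (redA S.ψ) (VA * VAᴴ) ∧
    IsSupportProjection (redB S.ψ) (VB * VBᴴ) ∧
    (∀ x a, Sp.M x a = VAᴴ * S.M x a * VA) ∧
    (∀ y b, Sp.N y b = VBᴴ * S.N y b * VB) ∧
    (VAᴴ ⊗ₖ VBᴴ).mulVec S.ψ = Sp.ψ

/-- The associated representation of `S` is irreducible: every matrix commuting with all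
`M^x_a ⊗ Id` and `Id ⊗ N^y_b` is a scalar multiple of the identity. -/
def IrreducibleModel (S : QModel X Y A B) : Prop :=
  ∀ T : Matrix (Fin S.dA × Fin S.dB) (Fin S.dA × Fin S.dB) ℂ,
    (∀ x a, T * (S.M x a ⊗ₖ (1 : Matrix (Fin S.dB) (Fin S.dB) ℂ))
      = (S.M x a ⊗ₖ (1 : Matrix (Fin S.dB) (Fin S.dB) ℂ)) * T) →
    (∀ y b, T * ((1 : Matrix (Fin S.dA) (Fin S.dA) ℂ) ⊗ₖ S.N y b)
      = ((1 : Matrix (Fin S.dA) (Fin S.dA) ℂ) ⊗ₖ S.N y b) * T) →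
    ∃ c : ℂ, T = c • (1 : Matrix (Fin S.dA × Fin S.dB) (Fin S.dA × Fin S.dB) ℂ)



open Matrix in
private lemma psd_sum' {n : ℕ} {A : Type} [Fintype A] (s : Finset A)
    (f : A → Matrix (Fin n) (Fin n) ℂ) (hf : ∀ a ∈ s, (f a).PosSemidef) :
    (∑ a ∈ s, f a).PosSemidef := by
  classical
  induction s using Finset.induction with
  | empty => simpa using Matrix.PosSemidef.zero
  | insert _ _ h ih =>
      rw [Finset.sum_insert h]
      exact (hf _ (Finset.mem_insert_self _ _)).add
        (ih fun a ha => hf a (Finset.mem_insert_of_mem ha))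

open scoped MatrixOrder in
open Matrix in
private lemma psd_sub_sq' {n : ℕ} {M : Matrix (Fin n) (Fin n) ℂ}
    (hM : M.PosSemidef) (h1 : (1 - M).PosSemidef) : (M - M * M).PosSemidef := by
  have hQ : CFC.sqrt M * CFC.sqrt M = M := CFC.sqrt_mul_sqrt_self M hM.nonneg
  have hherm : (CFC.sqrt M)ᴴ = CFC.sqrt M := (CFC.sqrt_nonneg M).posSemidef.1
  have key := h1.mul_mul_conjTranspose_same (CFC.sqrt M)
  rw [hherm] at key
  convert key using 1
  have h2 : ∀ Q : Matrix (Fin n) (Fin n) ℂ, Q * Q = M → Q * M * Q = M * M := by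
    intro Q h; rw [← h]; simp [mul_assoc]
  rw [mul_sub, mul_one, sub_mul, hQ, h2 _ hQ]

open Matrix in
private lemma sub_kron' {l m n p : ℕ} (A B : Matrix (Fin l) (Fin m) ℂ)
    (C : Matrix (Fin n) (Fin p) ℂ) : (A - B) ⊗ₖ C = A ⊗ₖ C - B ⊗ₖ C := by
  ext ⟨i, j⟩ ⟨i', j'⟩
  simp [Matrix.kroneckerMap_apply, sub_mul]

open Matrix in
private lemma kron_sub' {l m n p : ℕ} (C : Matrix (Fin l) (Fin m) ℂ)
    (A B : Matrix (Fin n) (Fin p) ℂ) : C ⊗ₖ (A - B) = C ⊗ₖ A - C ⊗ₖ B := by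
  ext ⟨i, j⟩ ⟨i', j'⟩
  simp [Matrix.kroneckerMap_apply, mul_sub]

open Matrix in
private lemma quadA' {m n : ℕ} (D : Matrix (Fin m) (Fin m) ℂ) (ψ : Fin m × Fin n → ℂ) :
    star ψ ⬝ᵥ (D ⊗ₖ (1 : Matrix (Fin n) (Fin n) ℂ)) *ᵥ ψ
      = ∑ j, star (fun i => ψ (i,j)) ⬝ᵥ D *ᵥ (fun i => ψ (i,j)) := by
  simp only [dotProduct, Matrix.mulVec, Matrix.kroneckerMap_apply, Matrix.one_apply,
    Fintype.sum_prod_type, Pi.star_apply, mul_ite, ite_mul, mul_one, mul_zero, zero_mul,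
    Finset.mul_sum]
  rw [Finset.sum_comm]
  refine Finset.sum_congr rfl fun j _ => Finset.sum_congr rfl fun i _ => ?_
  simp [Finset.sum_ite_eq, Finset.mul_sum]

open Matrix in
private lemma quadB' {m n : ℕ} (D : Matrix (Fin n) (Fin n) ℂ) (ψ : Fin m × Fin n → ℂ) :
    star ψ ⬝ᵥ ((1 : Matrix (Fin m) (Fin m) ℂ) ⊗ₖ D) *ᵥ ψ
      = ∑ i, star (fun j => ψ (i,j)) ⬝ᵥ D *ᵥ (fun j => ψ (i,j)) := by
  simp only [dotProduct, Matrix.mulVec, Matrix.kroneckerMap_apply, Matrix.one_apply,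
    Fintype.sum_prod_type, Pi.star_apply, mul_ite, ite_mul, mul_one, mul_zero, zero_mul,
    Finset.mul_sum]
  refine Finset.sum_congr rfl fun i _ => Finset.sum_congr rfl fun j _ => ?_
  simp [Finset.sum_ite_eq, Finset.mul_sum]

open Matrix in
private lemma zero_of_ker' {m : ℕ} (ρ D : Matrix (Fin m) (Fin m) ℂ)
    (hfr : ∀ v, ρ *ᵥ v = 0 → v = 0) (hρD : ρ * D = 0) : D = 0 := by
  ext i j
  have h0 : D *ᵥ Pi.single j 1 = 0 := by
    apply hfr
    rw [Matrix.mulVec_mulVec, hρD, Matrix.zero_mulVec]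
  have := congrFun h0 i
  rw [Matrix.mulVec_single] at this
  simpa using this

open Matrix in
private lemma redA_mul_eq_zero' {m n : ℕ} (D : Matrix (Fin m) (Fin m) ℂ)
    (ψ : Fin m × Fin n → ℂ) (hH : Dᴴ = D)
    (h : ∀ j, D *ᵥ (fun i => ψ (i,j)) = 0) : redA ψ * D = 0 := by
  have hDc : ∀ (j : Fin n) (i'' : Fin m), ∑ i', star (ψ (i', j)) * D i' i'' = 0 := by
    intro j i''
    have h1 := congrFun (h j) i''
    simp only [Matrix.mulVec, dotProduct, Pi.zero_apply] at h1
    calc ∑ i', star (ψ (i', j)) * D i' i''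
        = star (∑ i', D i'' i' * ψ (i', j)) := by
          rw [star_sum]
          refine Finset.sum_congr rfl fun i' _ => ?_
          have h3 : star (D i'' i') = D i' i'' := by
            have := congrFun (congrFun hH i') i''
            simpa [Matrix.conjTranspose_apply] using this
          rw [StarMul.star_mul, h3]
      _ = 0 := by rw [h1, star_zero]
  ext i i''
  simp only [redA, Matrix.mul_apply, Matrix.of_apply, Matrix.zero_apply]
  calc ∑ i', (∑ j, ψ (i,j) * star (ψ (i',j))) * D i' i''
      = ∑ j, ψ (i,j) * ∑ i', star (ψ (i',j)) * D i' i'' := by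
        simp only [Finset.sum_mul, Finset.mul_sum]
        rw [Finset.sum_comm]
        exact Finset.sum_congr rfl fun j _ => Finset.sum_congr rfl fun i' _ => by ring
    _ = 0 := by
        refine Finset.sum_eq_zero fun j _ => ?_
        rw [show ∑ i', star (ψ (i',j)) * D i' i'' = 0 from hDc j i'', mul_zero]

open Matrix in
private lemma redB_mul_eq_zero' {m n : ℕ} (D : Matrix (Fin n) (Fin n) ℂ)
    (ψ : Fin m × Fin n → ℂ) (hH : Dᴴ = D)
    (h : ∀ i, D *ᵥ (fun j => ψ (i,j)) = 0) : redB ψ * D = 0 := by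
  have hDc : ∀ (i : Fin m) (j'' : Fin n), ∑ j', star (ψ (i, j')) * D j' j'' = 0 := by
    intro i j''
    have h1 := congrFun (h i) j''
    simp only [Matrix.mulVec, dotProduct, Pi.zero_apply] at h1
    calc ∑ j', star (ψ (i, j')) * D j' j''
        = star (∑ j', D j'' j' * ψ (i, j')) := by
          rw [star_sum]
          refine Finset.sum_congr rfl fun j' _ => ?_
          have h3 : star (D j'' j') = D j' j'' := by
            have := congrFun (congrFun hH j') j''
            simpa [Matrix.conjTranspose_apply] using this
          rw [StarMul.star_mul, h3]
      _ = 0 := by rw [h1, star_zero]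
  ext j j''
  simp only [redB, Matrix.mul_apply, Matrix.of_apply, Matrix.zero_apply]
  calc ∑ j', (∑ i, ψ (i,j) * star (ψ (i,j'))) * D j' j''
      = ∑ i, ψ (i,j) * ∑ j', star (ψ (i,j')) * D j' j'' := by
        simp only [Finset.sum_mul, Finset.mul_sum]
        rw [Finset.sum_comm]
        exact Finset.sum_congr rfl fun i _ => Finset.sum_congr rfl fun j' _ => by ring
    _ = 0 := by
        refine Finset.sum_eq_zero fun i _ => ?_
        rw [show ∑ j', star (ψ (i,j')) * D j' j'' = 0 from hDc i j'', mul_zero]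

private lemma qInner_eq_dot {n : Type} [Fintype n] (v w : n → ℂ) :
    qInner v w = star v ⬝ᵥ w := by
  simp [qInner, dotProduct]


/-- A full-rank model whose abstract state is projective (i.e. agrees with the
abstract state of some projective model) is itself projective. -/
theorem statement13 {X Y A B : Type} [Fintype A] [Fintype B]
    (S : QModel X Y A B) (hfr : FullRank S)
    (h : ∃ S' : QModel X Y A B, Projective S' ∧ SameState S S') :
    Projective S := by
  classical
  obtain ⟨S', hproj, hsame⟩ := h
  constructor
  · intro x a
    have hM := S.M_pos x a
    refine ⟨hM.1, ?_⟩
    have h1M : ((1 : Matrix (Fin S.dA) (Fin S.dA) ℂ) - S.M x a).PosSemidef := by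
      have hadd := Finset.add_sum_erase Finset.univ (S.M x) (Finset.mem_univ a)
      rw [S.M_sum x] at hadd
      rw [(eq_sub_of_add_eq' hadd).symm]
      exact psd_sum' _ _ fun a' _ => S.M_pos x a'
    have hD : (S.M x a - S.M x a * S.M x a).PosSemidef := psd_sub_sq' hM h1M
    have hw2 : wordValue S [(x,a),(x,a)] [] = wordValue S [(x,a)] [] := by
      rw [hsame [(x,a),(x,a)] [], hsame [(x,a)] []]
      unfold wordValue
      simp only [List.map_cons, List.map_nil, List.prod_cons, List.prod_nil, mul_one]
      rw [(hproj.1 x a).2]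
    have hq : star S.ψ ⬝ᵥ ((S.M x a - S.M x a * S.M x a)
        ⊗ₖ (1 : Matrix (Fin S.dB) (Fin S.dB) ℂ)) *ᵥ S.ψ = 0 := by
      rw [sub_kron', Matrix.sub_mulVec, dotProduct_sub, sub_eq_zero]
      have h1 := hw2
      unfold wordValue at h1
      simp only [List.map_cons, List.map_nil, List.prod_cons, List.prod_nil, mul_one] at h1
      rw [qInner_eq_dot, qInner_eq_dot] at h1
      exact h1.symm
    have hcols : ∀ j, (S.M x a - S.M x a * S.M x a) *ᵥ (fun i => S.ψ (i,j)) = 0 := by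
      intro j
      have hsum : ∑ j, star (fun i => S.ψ (i,j)) ⬝ᵥ
          (S.M x a - S.M x a * S.M x a) *ᵥ (fun i => S.ψ (i,j)) = 0 := by
        rw [← quadA']; exact hq
      have hterm := (Finset.sum_eq_zero_iff_of_nonneg
        (fun j _ => hD.dotProduct_mulVec_nonneg (fun i => S.ψ (i,j)))).mp hsum j (Finset.mem_univ j)
      exact (hD.dotProduct_mulVec_zero_iff _).mp hterm
    have hker := redA_mul_eq_zero' _ S.ψ hD.1 hcols
    have hz := zero_of_ker' (redA S.ψ) _ hfr.1 hker
    exact (sub_eq_zero.mp hz).symm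
  · intro y b
    have hM := S.N_pos y b
    refine ⟨hM.1, ?_⟩
    have h1M : ((1 : Matrix (Fin S.dB) (Fin S.dB) ℂ) - S.N y b).PosSemidef := by
      have hadd := Finset.add_sum_erase Finset.univ (S.N y) (Finset.mem_univ b)
      rw [S.N_sum y] at hadd
      rw [(eq_sub_of_add_eq' hadd).symm]
      exact psd_sum' _ _ fun b' _ => S.N_pos y b'
    have hD : (S.N y b - S.N y b * S.N y b).PosSemidef := psd_sub_sq' hM h1M
    have hw2 : wordValue S [] [(y,b),(y,b)] = wordValue S [] [(y,b)] := by
      rw [hsame [] [(y,b),(y,b)], hsame [] [(y,b)]]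
      unfold wordValue
      simp only [List.map_cons, List.map_nil, List.prod_cons, List.prod_nil, mul_one]
      rw [(hproj.2 y b).2]
    have hq : star S.ψ ⬝ᵥ ((1 : Matrix (Fin S.dA) (Fin S.dA) ℂ)
        ⊗ₖ (S.N y b - S.N y b * S.N y b)) *ᵥ S.ψ = 0 := by
      rw [kron_sub', Matrix.sub_mulVec, dotProduct_sub, sub_eq_zero]
      have h1 := hw2
      unfold wordValue at h1
      simp only [List.map_cons, List.map_nil, List.prod_cons, List.prod_nil, mul_one] at h1
      rw [qInner_eq_dot, qInner_eq_dot] at h1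
      exact h1.symm
    have hrows : ∀ i, (S.N y b - S.N y b * S.N y b) *ᵥ (fun j => S.ψ (i,j)) = 0 := by
      intro i
      have hsum : ∑ i, star (fun j => S.ψ (i,j)) ⬝ᵥ
          (S.N y b - S.N y b * S.N y b) *ᵥ (fun j => S.ψ (i,j)) = 0 := by
        rw [← quadB']; exact hq
      have hterm := (Finset.sum_eq_zero_iff_of_nonneg
        (fun i _ => hD.dotProduct_mulVec_nonneg (fun j => S.ψ (i,j)))).mp hsum i (Finset.mem_univ i)
      exact (hD.dotProduct_mulVec_zero_iff _).mp hterm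
    have hker := redB_mul_eq_zero' _ S.ψ hD.1 hrows
    have hz := zero_of_ker' (redB S.ψ) _ hfr.2 hker
    exact (sub_eq_zero.mp hz).symm


end SelfTestPaper
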